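/- Let C ≥ 2, d ≥ 1, and 0 ≤ γ < 1. Let W ∈ ℝ^{C×d} be a matrix whose rows W_1, …, W_C each have ℓ₂ norm exactly √d and satisfy ⟨W_c, W_{c'}⟩ ≤ γ·d for all c ≠ c' (i.e., the cosine similarity of any two distinct rows is at most γ). Let x ∈ ℝ^d, y ∈ {1, …, C}, and let ℒ = ℒ(x, y; W) be the margin loss. If β₀ > ℒ / (d(1 − γ)) and δ = β₀ · W_y, then for every c ≠ y one has ⟨W_y, x + δ⟩ > ⟨W_c, x + δ⟩; that is, the perturbed example (x + δ, y) is strictly correctly classified by W. -/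

import Mathlib

open scoped BigOperators

/-- The margin loss `ℒ(x, y; W) = max(max_{t ≠ y} ⟨W_t, x⟩ − ⟨W_y, x⟩, 0)`
of a linear classifier with weight rows `W_c`. -/
noncomputable def marginLoss {C d : ℕ} (W : Fin C → EuclideanSpace ℝ (Fin d))
    (x : EuclideanSpace ℝ (Fin d)) (y : Fin C) : ℝ :=
  max (⨆ t : {t : Fin C // t ≠ y}, ((inner ℝ (W t.1) x : ℝ) - (inner ℝ (W y) x : ℝ))) 0

/-- If the rows of `W` have norm `√d` and pairwise inner products
at most `γ·d` (cosine similarity at most `γ`), then for any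
`β₀ > ℒ(x,y;W) / (d(1−γ))`, the perturbation `δ = β₀·W_y` makes `(x + δ, y)`
strictly correctly classified by `W`. -/
theorem poison_along_row_correctly_classifies
    (C d : ℕ) (hC : 2 ≤ C) (hd : 1 ≤ d)
    (γ : ℝ) (hγ0 : 0 ≤ γ) (hγ1 : γ < 1)
    (W : Fin C → EuclideanSpace ℝ (Fin d))
    (hWnorm : ∀ c, ‖W c‖ = Real.sqrt d)
    (hWsim : ∀ c c', c ≠ c' → (inner ℝ (W c) (W c') : ℝ) ≤ γ * d)
    (x : EuclideanSpace ℝ (Fin d)) (y : Fin C)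
    (β₀ : ℝ) (hβ₀ : β₀ > marginLoss W x y / (d * (1 - γ)))
    (δ : EuclideanSpace ℝ (Fin d)) (hδ : δ = β₀ • W y) :
    ∀ c, c ≠ y → (inner ℝ (W y) (x + δ) : ℝ) > (inner ℝ (W c) (x + δ) : ℝ) := by
  intro c hc
  have hdpos : (0:ℝ) < d := by exact_mod_cast hd
  have hpos : (0:ℝ) < d * (1 - γ) := mul_pos hdpos (by linarith)
  have hML : 0 ≤ marginLoss W x y := le_max_right _ _
  have hβpos : 0 < β₀ := lt_of_le_of_lt (div_nonneg hML hpos.le) hβ₀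
  -- margin bound
  have hle : (inner ℝ (W c) x : ℝ) - (inner ℝ (W y) x : ℝ) ≤ marginLoss W x y := by
    refine le_trans ?_ (le_max_left _ _)
    exact le_ciSup (f := fun t : {t : Fin C // t ≠ y} => ((inner ℝ (W t.1) x : ℝ) - (inner ℝ (W y) x : ℝ)))
      (Set.Finite.bddAbove (Set.finite_range _)) ⟨c, hc⟩
  have hyy : (inner ℝ (W y) (W y) : ℝ) = d := by
    rw [real_inner_self_eq_norm_sq, hWnorm, Real.sq_sqrt hdpos.le]
  have hcy : (inner ℝ (W c) (W y) : ℝ) ≤ γ * d := hWsim c y hc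
  have key : marginLoss W x y < β₀ * (d * (1 - γ)) :=
    (div_lt_iff₀ hpos).mp hβ₀
  subst hδ
  simp only [inner_add_right, inner_smul_right, hyy]
  have h1 : β₀ * (inner ℝ (W c) (W y) : ℝ) ≤ β₀ * (γ * d) :=
    mul_le_mul_of_nonneg_left hcy hβpos.le
  nlinarith [hle.trans_lt key]
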